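/- Let q ≥ 2 be even, let (P, L) be a finite projective plane of order q, let B be a projective bundle, and let ℓ ∈ L be a line. Then there exists a point N ∈ P with N ∉ ℓ such that every oval of B tangent to ℓ contains N; that is, the q+1 tangent ovals of ℓ are concurrent. -/
import Mathlib


/-- A finite projective plane of order `q`, given by its set of lines (each line a
finite set of points of the ambient point type `P`): any two distinct points lie on
exactly one common line, any two distinct lines meet in exactly one point, there are
four points no three of which are collinear, and every line has `q + 1` points. -/
structure IsProjectivePlane (q : ℕ) {P : Type} [DecidableEq P] (L : Finset (Finset P)) : Prop where
  exists_unique_line : ∀ p₁ p₂ : P, p₁ ≠ p₂ → ∃! ℓ, ℓ ∈ L ∧ p₁ ∈ ℓ ∧ p₂ ∈ ℓ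
  exists_unique_point : ∀ ℓ₁ ∈ L, ∀ ℓ₂ ∈ L, ℓ₁ ≠ ℓ₂ → ∃! p, p ∈ ℓ₁ ∧ p ∈ ℓ₂
  nondeg : ∃ a b c d : P, a ≠ b ∧ a ≠ c ∧ a ≠ d ∧ b ≠ c ∧ b ≠ d ∧ c ≠ d ∧
      ∀ ℓ ∈ L, (ℓ ∩ ({a, b, c, d} : Finset P)).card ≤ 2
  card_line : ∀ ℓ ∈ L, ℓ.card = q + 1

/-- An oval: a set of `q + 1` points such that every line contains at most two of them. -/
def IsOval (q : ℕ) {P : Type} [DecidableEq P] (L : Finset (Finset P)) (O : Finset P) : Prop :=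
  O.card = q + 1 ∧ ∀ ℓ ∈ L, (ℓ ∩ O).card ≤ 2

/-- A projective bundle: a set of `q² + q + 1` ovals, any two of which meet in
exactly one point. -/
def IsProjectiveBundle (q : ℕ) {P : Type} [DecidableEq P] (L : Finset (Finset P))
    (B : Finset (Finset P)) : Prop :=
  B.card = q ^ 2 + q + 1 ∧ (∀ o ∈ B, IsOval q L o) ∧
    ∀ o₁ ∈ B, ∀ o₂ ∈ B, o₁ ≠ o₂ → (o₁ ∩ o₂).card = 1



open Finset in
lemma double_count {P : Type} [DecidableEq P] (s : Finset P) (F : Finset (Finset P)) :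
    ∑ x ∈ s, (F.filter (fun o => x ∈ o)).card = ∑ o ∈ F, (o ∩ s).card := by
  simp only [Finset.card_filter]
  rw [Finset.sum_comm]
  refine Finset.sum_congr rfl fun o _ => ?_
  rw [Finset.inter_comm, ← Finset.filter_mem_eq_inter, Finset.card_filter]

open Finset in
lemma double_count2 {P : Type} [DecidableEq P] (s : Finset P) (F G : Finset (Finset P)) :
    ∑ x ∈ s, (F.filter (fun o => x ∈ o)).card * (G.filter (fun o => x ∈ o)).card
      = ∑ o ∈ F, ∑ o' ∈ G, (o ∩ o' ∩ s).card := by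
  have h : ∀ x : P, (F.filter (fun o => x ∈ o)).card * (G.filter (fun o => x ∈ o)).card
      = ∑ o ∈ F, ∑ o' ∈ G, (if x ∈ o ∧ x ∈ o' then 1 else 0) := by
    intro x
    rw [Finset.card_filter, Finset.card_filter, Finset.sum_mul_sum]
    refine Finset.sum_congr rfl fun o _ => Finset.sum_congr rfl fun o' _ => ?_
    split_ifs with h1 h2 h3 <;> simp_all
  simp only [h]
  rw [Finset.sum_comm]
  refine Finset.sum_congr rfl fun o _ => ?_
  rw [Finset.sum_comm]
  refine Finset.sum_congr rfl fun o' _ => ?_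
  rw [Finset.inter_comm, ← Finset.filter_mem_eq_inter, Finset.card_filter]
  simp [Finset.mem_inter]



lemma card_points {q : ℕ} {P : Type} [Fintype P] [DecidableEq P] {L : Finset (Finset P)}
    (hL : IsProjectivePlane q L) : Fintype.card P = q ^ 2 + q + 1 := by
  obtain ⟨a, b, c, d, hab, hac, had, hbc, hbd, hcd, hquad⟩ := hL.nondeg
  obtain ⟨ℓ0, ⟨hℓ0L, haℓ0, hbℓ0⟩, -⟩ := hL.exists_unique_line a b hab
  have hcℓ0 : c ∉ ℓ0 := by
    intro hc
    have h3 : ({a, b, c} : Finset P) ⊆ ℓ0 ∩ {a, b, c, d} := by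
      intro x hx
      simp only [Finset.mem_insert, Finset.mem_singleton] at hx
      rcases hx with rfl | rfl | rfl <;> simp [Finset.mem_inter, haℓ0, hbℓ0, hc]
    have h5 := Finset.card_le_card h3
    have h6 := hquad ℓ0 hℓ0L
    rw [Finset.card_insert_of_notMem (by simp [hab, hac]),
      Finset.card_insert_of_notMem (by simp [hbc]), Finset.card_singleton] at h5
    omega
  -- for each p ∈ ℓ0, the line through c and p
  have hcp : ∀ p ∈ ℓ0, p ≠ c := fun p hp h => hcℓ0 (h ▸ hp)
  -- choose lines
  have key : ∀ p ∈ ℓ0, ∃ m, m ∈ L ∧ c ∈ m ∧ p ∈ m := by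
    intro p hp
    obtain ⟨m, ⟨h1, h2, h3⟩, -⟩ := hL.exists_unique_line c p (Ne.symm (hcp p hp))
    exact ⟨m, h1, h2, h3⟩
  choose f hfL hcf hpf using key
  have line_unique : ∀ {x y : P} {m₁ m₂ : Finset P}, x ≠ y → m₁ ∈ L → m₂ ∈ L →
      x ∈ m₁ → y ∈ m₁ → x ∈ m₂ → y ∈ m₂ → m₁ = m₂ := by
    intro x y m₁ m₂ hxy h1 h2 hx1 hy1 hx2 hy2
    obtain ⟨m, -, hu⟩ := hL.exists_unique_line x y hxy
    rw [hu m₁ ⟨h1, hx1, hy1⟩, hu m₂ ⟨h2, hx2, hy2⟩]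
  have hcover : Finset.univ.erase c = ℓ0.attach.biUnion
      (fun p => (f p.1 p.2).erase c) := by
    ext x
    constructor
    · intro hx
      rw [Finset.mem_erase] at hx
      have hxc : x ≠ c := hx.1
      obtain ⟨m, ⟨hmL, hcm, hxm⟩, -⟩ := hL.exists_unique_line c x (Ne.symm hxc)
      have hmℓ0 : m ≠ ℓ0 := fun h => hcℓ0 (h ▸ hcm)
      obtain ⟨p, ⟨hpm, hpℓ0⟩, -⟩ := hL.exists_unique_point m hmL ℓ0 hℓ0L hmℓ0
      rw [Finset.mem_biUnion]
      refine ⟨⟨p, hpℓ0⟩, Finset.mem_attach _ _, ?_⟩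
      rw [Finset.mem_erase]
      have : f p hpℓ0 = m := line_unique (Ne.symm (hcp p hpℓ0)) (hfL p hpℓ0) hmL
        (hcf p hpℓ0) (hpf p hpℓ0) hcm hpm
      exact ⟨hxc, this ▸ hxm⟩
    · intro hx
      rw [Finset.mem_biUnion] at hx
      obtain ⟨p, -, hxp⟩ := hx
      rw [Finset.mem_erase] at hxp
      exact Finset.mem_erase.mpr ⟨hxp.1, Finset.mem_univ x⟩
  have hdisj : ∀ (p₁ : {x // x ∈ ℓ0}), p₁ ∈ ℓ0.attach → ∀ (p₂ : {x // x ∈ ℓ0}),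
      p₂ ∈ ℓ0.attach → p₁ ≠ p₂ →
      Disjoint ((f p₁.1 p₁.2).erase c) ((f p₂.1 p₂.2).erase c) := by
    rintro ⟨p₁, hp1⟩ - ⟨p₂, hp2⟩ - hne
    simp only [ne_eq, Subtype.mk.injEq] at hne
    rw [Finset.disjoint_left]
    rintro x hx1 hx2
    rw [Finset.mem_erase] at hx1 hx2
    have hm : f p₁ hp1 = f p₂ hp2 :=
      line_unique (y := x) (Ne.symm hx1.1) (hfL p₁ hp1) (hfL p₂ hp2)
        (hcf p₁ hp1) hx1.2 (hcf p₂ hp2) hx2.2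
    -- now p₁, p₂ both in f p₁ hp1 and in ℓ0, two distinct lines or same?
    have hfne : f p₁ hp1 ≠ ℓ0 := fun h => hcℓ0 (h ▸ hcf p₁ hp1)
    obtain ⟨z, -, hz⟩ := hL.exists_unique_point (f p₁ hp1) (hfL p₁ hp1) ℓ0 hℓ0L hfne
    have e1 := hz p₁ ⟨hpf p₁ hp1, hp1⟩
    have e2 := hz p₂ ⟨hm ▸ hpf p₂ hp2, hp2⟩
    exact hne (e1.trans e2.symm)
  have hcard : (Finset.univ.erase c).card = ℓ0.card * q := by
    rw [hcover, Finset.card_biUnion hdisj]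
    have : ∀ p ∈ ℓ0.attach, ((f p.1 p.2).erase c).card = q := by
      intro p _
      rw [Finset.card_erase_of_mem (hcf p.1 p.2), hL.card_line _ (hfL p.1 p.2)]; omega
    rw [Finset.sum_congr rfl this, Finset.sum_const, Finset.card_attach, smul_eq_mul]
  rw [Finset.card_erase_of_mem (Finset.mem_univ c), Finset.card_univ,
    hL.card_line ℓ0 hℓ0L] at hcard
  have h1 : 1 ≤ Fintype.card P := Fintype.card_pos_iff.mpr ⟨c⟩
  have h2 : Fintype.card P = (q + 1) * q + 1 := by omega
  rw [h2]; ring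

lemma ovals_through_point {q : ℕ} {P : Type} [Fintype P] [DecidableEq P]
    {L : Finset (Finset P)} (hL : IsProjectivePlane q L)
    {B : Finset (Finset P)} (hB : IsProjectiveBundle q L B) (x : P) :
    (B.filter (fun o => x ∈ o)).card = q + 1 := by
  obtain ⟨hBcard, hoval, hmeet⟩ := hB
  set n := q ^ 2 + q + 1 with hn
  have hP : Fintype.card P = n := card_points hL
  set r : P → ℕ := fun x => (B.filter (fun o => x ∈ o)).card with hr
  have hsum : ∑ y : P, r y = n * (q + 1) := by
    rw [double_count Finset.univ B]
    rw [Finset.sum_congr rfl (fun o ho => by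
      rw [Finset.inter_univ, (hoval o ho).1]), Finset.sum_const, hBcard, smul_eq_mul]
  have hsumsq : ∑ y : P, r y * r y = n * (q + 1) ^ 2 := by
    rw [double_count2 Finset.univ B B]
    have step : ∀ o ∈ B, ∑ o' ∈ B, (o ∩ o' ∩ Finset.univ).card = (q + 1) + (n - 1) := by
      intro o ho
      rw [← Finset.add_sum_erase _ _ ho]
      have e1 : (o ∩ o ∩ Finset.univ).card = q + 1 := by
        rw [Finset.inter_self, Finset.inter_univ, (hoval o ho).1]
      have e2 : ∑ o' ∈ B.erase o, (o ∩ o' ∩ Finset.univ).card = n - 1 := by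
        have e3 : ∀ o' ∈ B.erase o, (o ∩ o' ∩ Finset.univ).card = 1 := by
          intro o' ho'
          rw [Finset.mem_erase] at ho'
          rw [Finset.inter_univ]
          exact hmeet o ho o' ho'.2 (Ne.symm ho'.1)
        rw [Finset.sum_congr rfl e3, Finset.sum_const, Finset.card_erase_of_mem ho,
          hBcard, smul_eq_mul, mul_one]
      rw [e1, e2]
    rw [Finset.sum_congr rfl step, Finset.sum_const, hBcard, smul_eq_mul]
    have : n - 1 = q ^ 2 + q := by omega
    rw [this]; ring
  -- variance argument over ℤ
  have key : ∑ y : P, ((r y : ℤ) - (q + 1)) ^ 2 = 0 := by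
    have e1 : (∑ y : P, (r y : ℤ)) = n * (q + 1) := by exact_mod_cast congrArg Nat.cast hsum
    have e2 : (∑ y : P, (r y : ℤ) * (r y : ℤ)) = n * (q + 1) ^ 2 := by
      exact_mod_cast congrArg Nat.cast hsumsq
    have expand : ∀ y : P, ((r y : ℤ) - (q + 1)) ^ 2
        = (r y : ℤ) * (r y : ℤ) - 2 * (q + 1) * (r y : ℤ) + (q + 1) ^ 2 := fun y => by ring
    simp only [expand]
    rw [Finset.sum_add_distrib, Finset.sum_sub_distrib, Finset.sum_const, ← Finset.mul_sum,
      e1, e2, Finset.card_univ, hP]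
    push_cast
    ring
  have := (Finset.sum_eq_zero_iff_of_nonneg (fun y _ => sq_nonneg ((r y : ℤ) - (q + 1)))).mp key
    x (Finset.mem_univ x)
  have h2 : (r x : ℤ) = q + 1 := by
    have := sq_eq_zero_iff.mp this
    linarith
  exact_mod_cast h2

lemma oval_unique {q : ℕ} {P : Type} [DecidableEq P]
    {L : Finset (Finset P)} {B : Finset (Finset P)} (hB : IsProjectiveBundle q L B)
    {x y : P} (hxy : x ≠ y) {o₁ o₂ : Finset P} (h1 : o₁ ∈ B) (h2 : o₂ ∈ B)
    (hx1 : x ∈ o₁) (hy1 : y ∈ o₁) (hx2 : x ∈ o₂) (hy2 : y ∈ o₂) : o₁ = o₂ := by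
  by_contra hne
  have hcard := hB.2.2 o₁ h1 o₂ h2 hne
  have : ({x, y} : Finset P) ⊆ o₁ ∩ o₂ := by
    intro z hz
    simp only [Finset.mem_insert, Finset.mem_singleton] at hz
    rcases hz with rfl | rfl <;> simp [Finset.mem_inter, hx1, hx2, hy1, hy2]
  have := Finset.card_le_card this
  rw [Finset.card_insert_of_notMem (by simp [hxy]), Finset.card_singleton, hcard] at this
  omega

lemma inter_eq_of_mem {q : ℕ} {P : Type} [DecidableEq P]
    {L : Finset (Finset P)} {B : Finset (Finset P)} (hB : IsProjectiveBundle q L B)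
    {x : P} {o₁ o₂ : Finset P} (h1 : o₁ ∈ B) (h2 : o₂ ∈ B) (hne : o₁ ≠ o₂)
    (hx1 : x ∈ o₁) (hx2 : x ∈ o₂) : o₁ ∩ o₂ = {x} := by
  obtain ⟨a, ha⟩ := Finset.card_eq_one.mp (hB.2.2 o₁ h1 o₂ h2 hne)
  have : x ∈ o₁ ∩ o₂ := Finset.mem_inter.mpr ⟨hx1, hx2⟩
  rw [ha] at this ⊢
  rw [Finset.mem_singleton] at this
  rw [this]

lemma exists_oval {q : ℕ} {P : Type} [Fintype P] [DecidableEq P]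
    {L : Finset (Finset P)} (hL : IsProjectivePlane q L)
    {B : Finset (Finset P)} (hB : IsProjectiveBundle q L B)
    {x y : P} (hxy : x ≠ y) : ∃ o ∈ B, x ∈ o ∧ y ∈ o := by
  classical
  set Bx := B.filter (fun o => x ∈ o) with hBx
  have hBxcard : Bx.card = q + 1 := ovals_through_point hL hB x
  have hdisj : ∀ o₁ ∈ Bx, ∀ o₂ ∈ Bx, o₁ ≠ o₂ → Disjoint (o₁.erase x) (o₂.erase x) := by
    intro o₁ h1 o₂ h2 hne
    rw [Finset.mem_filter] at h1 h2
    rw [Finset.disjoint_left]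
    intro z hz1 hz2
    rw [Finset.mem_erase] at hz1 hz2
    have : z ∈ o₁ ∩ o₂ := Finset.mem_inter.mpr ⟨hz1.2, hz2.2⟩
    rw [inter_eq_of_mem hB h1.1 h2.1 hne h1.2 h2.2, Finset.mem_singleton] at this
    exact hz1.1 this
  have hsub : Bx.biUnion (fun o => o.erase x) ⊆ Finset.univ.erase x := by
    intro z hz
    rw [Finset.mem_biUnion] at hz
    obtain ⟨o, -, hzo⟩ := hz
    exact Finset.mem_erase.mpr ⟨(Finset.mem_erase.mp hzo).1, Finset.mem_univ z⟩
  have hcards : (Finset.univ.erase x).card ≤ (Bx.biUnion (fun o => o.erase x)).card := by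
    rw [Finset.card_biUnion hdisj]
    have : ∀ o ∈ Bx, (o.erase x).card = q := by
      intro o ho
      rw [Finset.mem_filter] at ho
      rw [Finset.card_erase_of_mem ho.2, (hB.2.1 o ho.1).1]; omega
    rw [Finset.sum_congr rfl this, Finset.sum_const, hBxcard, smul_eq_mul,
      Finset.card_erase_of_mem (Finset.mem_univ x), Finset.card_univ, card_points hL]
    have : 1 ≤ q ^ 2 + q + 1 := by omega
    have h2 : (q + 1) * q = q ^ 2 + q := by ring
    omega
  have heq := Finset.eq_of_subset_of_card_le hsub hcards
  have : y ∈ Bx.biUnion (fun o => o.erase x) := by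
    rw [heq]
    exact Finset.mem_erase.mpr ⟨Ne.symm hxy, Finset.mem_univ y⟩
  rw [Finset.mem_biUnion] at this
  obtain ⟨o, ho, hyo⟩ := this
  rw [Finset.mem_filter] at ho
  exact ⟨o, ho.1, ho.2, (Finset.mem_erase.mp hyo).2⟩

lemma tangent_at_point {q : ℕ} {P : Type} [Fintype P] [DecidableEq P]
    {L : Finset (Finset P)} (hL : IsProjectivePlane q L)
    {B : Finset (Finset P)} (hB : IsProjectiveBundle q L B)
    {ℓ : Finset P} (hℓ : ℓ ∈ L) {p : P} (hp : p ∈ ℓ) :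
    (B.filter (fun o => p ∈ o ∧ (o ∩ ℓ).card = 1)).card = 1 := by
  classical
  set Bp := B.filter (fun o => p ∈ o) with hBp
  have hBpcard : Bp.card = q + 1 := ovals_through_point hL hB p
  have hbounds : ∀ o ∈ Bp, 1 ≤ (o ∩ ℓ).card ∧ (o ∩ ℓ).card ≤ 2 := by
    intro o ho
    rw [Finset.mem_filter] at ho
    constructor
    · exact Finset.card_pos.mpr ⟨p, Finset.mem_inter.mpr ⟨ho.2, hp⟩⟩
    · rw [Finset.inter_comm]; exact (hB.2.1 o ho.1).2 ℓ hℓ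
  -- secants through p
  have hsec : (ℓ.erase p).card = (Bp.filter (fun o => (o ∩ ℓ).card = 2)).card := by
    have hne : ∀ p' ∈ ℓ.erase p, p ≠ p' := fun p' h =>
      Ne.symm (Finset.mem_erase.mp h).1
    refine Finset.card_bij (fun p' hp' => (exists_oval hL hB (hne p' hp')).choose) ?_ ?_ ?_
    · intro p' hp'
      obtain ⟨hoB, hpo, hp'o⟩ := (exists_oval hL hB (hne p' hp')).choose_spec
      rw [Finset.mem_filter, Finset.mem_filter]
      refine ⟨⟨hoB, hpo⟩, le_antisymm ?_ ?_⟩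
      · rw [Finset.inter_comm]; exact (hB.2.1 _ hoB).2 ℓ hℓ
      · apply Finset.one_lt_card.mpr
        exact ⟨p, Finset.mem_inter.mpr ⟨hpo, hp⟩, p',
          Finset.mem_inter.mpr ⟨hp'o, (Finset.mem_erase.mp hp').2⟩, hne p' hp'⟩
    · intro p₁ hp₁ p₂ hp₂ heq
      by_contra hne12
      obtain ⟨h1B, hpo1, h1o⟩ := (exists_oval hL hB (hne p₁ hp₁)).choose_spec
      obtain ⟨h2B, hpo2, h2o⟩ := (exists_oval hL hB (hne p₂ hp₂)).choose_spec
      have heq' : (exists_oval hL hB (hne p₁ hp₁)).choose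
          = (exists_oval hL hB (hne p₂ hp₂)).choose := heq
      rw [heq'] at h1o
      set o := (exists_oval hL hB (hne p₂ hp₂)).choose
      have hsub : ({p, p₁, p₂} : Finset P) ⊆ o ∩ ℓ := by
        intro z hz
        simp only [Finset.mem_insert, Finset.mem_singleton] at hz
        rcases hz with rfl | rfl | rfl
        · exact Finset.mem_inter.mpr ⟨hpo2, hp⟩
        · exact Finset.mem_inter.mpr ⟨h1o, (Finset.mem_erase.mp hp₁).2⟩
        · exact Finset.mem_inter.mpr ⟨h2o, (Finset.mem_erase.mp hp₂).2⟩
      have h3 := Finset.card_le_card hsub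
      rw [Finset.card_insert_of_notMem (by simp [hne p₁ hp₁, hne p₂ hp₂]),
        Finset.card_insert_of_notMem (by simp [hne12]), Finset.card_singleton] at h3
      have h4 : (o ∩ ℓ).card ≤ 2 := by
        rw [Finset.inter_comm]; exact (hB.2.1 _ h2B).2 ℓ hℓ
      omega
    · intro o ho
      rw [Finset.mem_filter, Finset.mem_filter] at ho
      obtain ⟨⟨hoB, hpo⟩, hcard2⟩ := ho
      have : ((o ∩ ℓ).erase p).Nonempty := by
        rw [← Finset.card_pos, Finset.card_erase_of_mem (Finset.mem_inter.mpr ⟨hpo, hp⟩),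
          hcard2]
        omega
      obtain ⟨p', hp'⟩ := this
      rw [Finset.mem_erase, Finset.mem_inter] at hp'
      have hp'mem : p' ∈ ℓ.erase p := Finset.mem_erase.mpr ⟨hp'.1, hp'.2.2⟩
      refine ⟨p', hp'mem, ?_⟩
      obtain ⟨hoB', hpo', hp'o'⟩ := (exists_oval hL hB (hne p' hp'mem)).choose_spec
      exact oval_unique hB (hne p' hp'mem) hoB' hoB hpo' hp'o' hpo hp'.2.1
  rw [Finset.card_erase_of_mem hp, hL.card_line ℓ hℓ] at hsec
  have hsplit := Finset.card_filter_add_card_filter_not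
    (s := Bp) (p := fun o => (o ∩ ℓ).card = 1)
  have heq2 : Bp.filter (fun o => ¬ (o ∩ ℓ).card = 1)
      = Bp.filter (fun o => (o ∩ ℓ).card = 2) := by
    apply Finset.filter_congr
    intro o ho
    have := hbounds o ho
    constructor
    · intro h; omega
    · intro h; omega
  have hTp : B.filter (fun o => p ∈ o ∧ (o ∩ ℓ).card = 1)
      = Bp.filter (fun o => (o ∩ ℓ).card = 1) := by
    rw [hBp, Finset.filter_filter]
  rw [hTp]
  rw [heq2, hBpcard, ← hsec] at hsplit
  omega

lemma tangents_card {q : ℕ} {P : Type} [Fintype P] [DecidableEq P]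
    {L : Finset (Finset P)} (hL : IsProjectivePlane q L)
    {B : Finset (Finset P)} (hB : IsProjectiveBundle q L B)
    {ℓ : Finset P} (hℓ : ℓ ∈ L) :
    (B.filter (fun o => (o ∩ ℓ).card = 1)).card = q + 1 := by
  classical
  have hcover : B.filter (fun o => (o ∩ ℓ).card = 1)
      = ℓ.biUnion (fun p => B.filter (fun o => p ∈ o ∧ (o ∩ ℓ).card = 1)) := by
    ext o
    simp only [Finset.mem_biUnion, Finset.mem_filter]
    constructor
    · rintro ⟨hoB, h1⟩
      obtain ⟨a, ha⟩ := Finset.card_eq_one.mp h1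
      have haℓ : a ∈ o ∩ ℓ := ha ▸ Finset.mem_singleton_self a
      rw [Finset.mem_inter] at haℓ
      exact ⟨a, haℓ.2, hoB, haℓ.1, h1⟩
    · rintro ⟨p, -, hoB, -, h1⟩
      exact ⟨hoB, h1⟩
  have hdisj : ∀ p₁ ∈ ℓ, ∀ p₂ ∈ ℓ, p₁ ≠ p₂ →
      Disjoint (B.filter (fun o => p₁ ∈ o ∧ (o ∩ ℓ).card = 1))
        (B.filter (fun o => p₂ ∈ o ∧ (o ∩ ℓ).card = 1)) := by
    intro p₁ h1 p₂ h2 hne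
    rw [Finset.disjoint_left]
    intro o ho1 ho2
    rw [Finset.mem_filter] at ho1 ho2
    have hsub : ({p₁, p₂} : Finset P) ⊆ o ∩ ℓ := by
      intro z hz
      simp only [Finset.mem_insert, Finset.mem_singleton] at hz
      rcases hz with rfl | rfl
      · exact Finset.mem_inter.mpr ⟨ho1.2.1, h1⟩
      · exact Finset.mem_inter.mpr ⟨ho2.2.1, h2⟩
    have h3 := Finset.card_le_card hsub
    rw [Finset.card_insert_of_notMem (by simp [hne]), Finset.card_singleton,
      ho1.2.2] at h3
    omega
  rw [hcover, Finset.card_biUnion hdisj]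
  have : ∀ p ∈ ℓ, (B.filter (fun o => p ∈ o ∧ (o ∩ ℓ).card = 1)).card = 1 :=
    fun p hp => tangent_at_point hL hB hℓ hp
  rw [Finset.sum_congr rfl this, Finset.sum_const, smul_eq_mul, mul_one,
    hL.card_line ℓ hℓ]

lemma tangent_through_external {q : ℕ} {P : Type} [Fintype P] [DecidableEq P]
    (heven : Even q) {L : Finset (Finset P)} (hL : IsProjectivePlane q L)
    {B : Finset (Finset P)} (hB : IsProjectiveBundle q L B)
    {ℓ : Finset P} (hℓ : ℓ ∈ L) {x : P} (hx : x ∉ ℓ) :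
    1 ≤ ((B.filter (fun o => (o ∩ ℓ).card = 1)).filter (fun o => x ∈ o)).card := by
  classical
  set Bx := B.filter (fun o => x ∈ o) with hBx
  have hBxcard : Bx.card = q + 1 := ovals_through_point hL hB x
  have hcover : ℓ = Bx.biUnion (fun o => o ∩ ℓ) := by
    ext p
    simp only [Finset.mem_biUnion, Finset.mem_inter]
    constructor
    · intro hp
      have hpx : x ≠ p := fun h => hx (h ▸ hp)
      obtain ⟨o, hoB, hxo, hpo⟩ := exists_oval hL hB hpx
      exact ⟨o, Finset.mem_filter.mpr ⟨hoB, hxo⟩, hpo, hp⟩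
    · rintro ⟨o, -, -, hp⟩
      exact hp
  have hdisj : ∀ o₁ ∈ Bx, ∀ o₂ ∈ Bx, o₁ ≠ o₂ → Disjoint (o₁ ∩ ℓ) (o₂ ∩ ℓ) := by
    intro o₁ h1 o₂ h2 hne
    rw [Finset.mem_filter] at h1 h2
    rw [Finset.disjoint_left]
    intro z hz1 hz2
    rw [Finset.mem_inter] at hz1 hz2
    have : z ∈ o₁ ∩ o₂ := Finset.mem_inter.mpr ⟨hz1.1, hz2.1⟩
    rw [inter_eq_of_mem hB h1.1 h2.1 hne h1.2 h2.2, Finset.mem_singleton] at this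
    exact hx (this ▸ hz1.2)
  have hsum : q + 1 = ∑ o ∈ Bx, (o ∩ ℓ).card := by
    rw [← hL.card_line ℓ hℓ]
    conv_lhs => rw [hcover]
    exact Finset.card_biUnion hdisj
  have hparity : (∑ o ∈ Bx, (o ∩ ℓ).card) % 2
      = (Bx.filter (fun o => (o ∩ ℓ).card = 1)).card % 2 := by
    rw [Finset.sum_nat_mod]
    have hpt : ∀ o ∈ Bx, (o ∩ ℓ).card % 2 = if (o ∩ ℓ).card = 1 then 1 else 0 := by
      intro o ho
      rw [Finset.mem_filter] at ho
      have h2 : (o ∩ ℓ).card ≤ 2 := by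
        rw [Finset.inter_comm]; exact (hB.2.1 o ho.1).2 ℓ hℓ
      interval_cases h : (o ∩ ℓ).card <;> simp
    rw [Finset.sum_congr rfl hpt, ← Finset.card_filter]
  have hset : Bx.filter (fun o => (o ∩ ℓ).card = 1)
      = (B.filter (fun o => (o ∩ ℓ).card = 1)).filter (fun o => x ∈ o) := by
    rw [hBx, Finset.filter_filter, Finset.filter_filter]
    exact Finset.filter_congr (fun o _ => by tauto)
  rw [hset] at hparity
  rw [← hsum] at hparity
  obtain ⟨k, hk⟩ := heven
  omega

/-- For `q ≥ 2` even, a projective bundle `B` and a line `ℓ`, the ovals of `B`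
tangent to `ℓ` are concurrent: there is a point `N ∉ ℓ` contained in every oval of `B`
tangent to `ℓ`. -/
theorem statement_10 (q : ℕ) (hq : 2 ≤ q) (heven : Even q) (P : Type) [Fintype P] [DecidableEq P]
    (L : Finset (Finset P)) (hL : IsProjectivePlane q L)
    (B : Finset (Finset P)) (hB : IsProjectiveBundle q L B)
    (ℓ : Finset P) (hℓ : ℓ ∈ L) :
    ∃ N : P, N ∉ ℓ ∧ ∀ o ∈ B, (o ∩ ℓ).card = 1 → N ∈ o := by
  classical
  set Tang := B.filter (fun o => (o ∩ ℓ).card = 1) with hTang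
  have hTangcard : Tang.card = q + 1 := tangents_card hL hB hℓ
  set E := Finset.univ \ ℓ with hE
  have hEcard : E.card = q ^ 2 := by
    rw [hE, Finset.card_sdiff_of_subset (Finset.subset_univ ℓ), Finset.card_univ, card_points hL,
      hL.card_line ℓ hℓ]
    omega
  set t : P → ℕ := fun x => (Tang.filter (fun o => x ∈ o)).card with ht
  have hoE : ∀ o ∈ Tang, (o ∩ E).card = q := by
    intro o ho
    rw [Finset.mem_filter] at ho
    have : o ∩ E = o \ ℓ := by
      ext z
      simp [hE, Finset.mem_sdiff, Finset.mem_inter]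
    rw [this]
    have h1 := Finset.card_sdiff_add_card_inter o ℓ
    rw [ho.2, (hB.2.1 o ho.1).1] at h1
    omega
  have hS1 : ∑ x ∈ E, t x = (q + 1) * q := by
    rw [ht]
    rw [double_count E Tang, Finset.sum_congr rfl hoE, Finset.sum_const, hTangcard,
      smul_eq_mul]
  have hmeetoff : ∀ o ∈ Tang, ∀ o' ∈ Tang, o ≠ o' → (o ∩ o' ∩ E).card = 1 := by
    intro o ho o' ho' hne
    rw [Finset.mem_filter] at ho ho'
    obtain ⟨z, hz⟩ := Finset.card_eq_one.mp (hB.2.2 o ho.1 o' ho'.1 hne)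
    have hzmem : z ∈ o ∩ o' := hz ▸ Finset.mem_singleton_self z
    rw [Finset.mem_inter] at hzmem
    have hzℓ : z ∉ ℓ := by
      intro hzℓ
      have h1 : o ∈ B.filter (fun o => z ∈ o ∧ (o ∩ ℓ).card = 1) :=
        Finset.mem_filter.mpr ⟨ho.1, hzmem.1, ho.2⟩
      have h2 : o' ∈ B.filter (fun o => z ∈ o ∧ (o ∩ ℓ).card = 1) :=
        Finset.mem_filter.mpr ⟨ho'.1, hzmem.2, ho'.2⟩
      exact hne (Finset.card_le_one.mp (le_of_eq (tangent_at_point hL hB hℓ hzℓ))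
        o h1 o' h2)
    have : o ∩ o' ∩ E = {z} := by
      rw [hz]
      ext w
      simp only [Finset.mem_inter, Finset.mem_singleton, hE, Finset.mem_sdiff,
        Finset.mem_univ, true_and, and_iff_left_iff_imp]
      rintro rfl
      exact hzℓ
    rw [this, Finset.card_singleton]
  have hS2 : ∑ x ∈ E, t x * t x = (q + 1) * (2 * q) := by
    rw [ht]
    rw [double_count2 E Tang Tang]
    have step : ∀ o ∈ Tang, ∑ o' ∈ Tang, (o ∩ o' ∩ E).card = 2 * q := by
      intro o ho
      rw [← Finset.add_sum_erase _ _ ho]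
      have e1 : (o ∩ o ∩ E).card = q := by rw [Finset.inter_self]; exact hoE o ho
      have e2 : ∀ o' ∈ Tang.erase o, (o ∩ o' ∩ E).card = 1 := by
        intro o' ho'
        rw [Finset.mem_erase] at ho'
        exact hmeetoff o ho o' ho'.2 (Ne.symm ho'.1)
      rw [e1, Finset.sum_congr rfl e2, Finset.sum_const, Finset.card_erase_of_mem ho,
        hTangcard, smul_eq_mul, mul_one]
      omega
    rw [Finset.sum_congr rfl step, Finset.sum_const, hTangcard, smul_eq_mul]
  have htpos : ∀ x ∈ E, 1 ≤ t x := by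
    intro x hx
    rw [hE, Finset.mem_sdiff] at hx
    exact tangent_through_external heven hL hB hℓ hx.2
  -- integer version
  set u : P → ℤ := fun x => (t x : ℤ) - 1 with hu
  have hu0 : ∀ x ∈ E, 0 ≤ u x := by
    intro x hx
    have := htpos x hx
    simp only [hu, sub_nonneg]
    exact_mod_cast this
  have hsumu : ∑ x ∈ E, u x = q := by
    rw [hu]
    rw [Finset.sum_sub_distrib, Finset.sum_const, hEcard]
    have : (∑ x ∈ E, (t x : ℤ)) = (q + 1) * q := by exact_mod_cast congrArg Nat.cast hS1
    rw [this]
    push_cast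
    ring
  have hsumusq : ∑ x ∈ E, u x * u x = q * q := by
    have expand : ∀ x ∈ E, u x * u x = (t x : ℤ) * (t x : ℤ) - 2 * (t x : ℤ) + 1 := by
      intro x _; rw [hu]; ring
    rw [Finset.sum_congr rfl expand]
    have e1 : (∑ x ∈ E, (t x : ℤ)) = (q + 1) * q := by exact_mod_cast congrArg Nat.cast hS1
    have e2 : (∑ x ∈ E, (t x : ℤ) * (t x : ℤ)) = (q + 1) * (2 * q) := by
      exact_mod_cast congrArg Nat.cast hS2
    rw [Finset.sum_add_distrib, Finset.sum_sub_distrib, Finset.sum_const, hEcard,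
      ← Finset.mul_sum, e1, e2]
    push_cast
    ring
  have hub : ∀ x ∈ E, u x ≤ q := by
    intro x hx
    calc u x ≤ ∑ y ∈ E, u y := Finset.single_le_sum hu0 hx
    _ = q := hsumu
  have hptle : ∀ x ∈ E, u x * u x ≤ q * u x := by
    intro x hx
    have := mul_le_mul_of_nonneg_right (hub x hx) (hu0 x hx)
    linarith
  have hsum_eq : ∑ x ∈ E, u x * u x = ∑ x ∈ E, q * u x := by
    rw [hsumusq, ← Finset.mul_sum, hsumu]
  have hall := (Finset.sum_eq_sum_iff_of_le hptle).mp hsum_eq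
  -- find N with u N ≠ 0
  have hex : ∃ N ∈ E, u N ≠ 0 := by
    by_contra hno
    push_neg at hno
    have : ∑ x ∈ E, u x = 0 := Finset.sum_eq_zero hno
    rw [hsumu] at this
    have h0 : q = 0 := by exact_mod_cast this
    omega
  obtain ⟨N, hNE, hNu⟩ := hex
  have hNq : u N = q := mul_right_cancel₀ hNu (hall N hNE)
  have htN : t N = q + 1 := by
    have h : (t N : ℤ) - 1 = q := hNq
    have : (t N : ℤ) = q + 1 := by linarith
    exact_mod_cast this
  have hfilt : Tang.filter (fun o => N ∈ o) = Tang := by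
    apply Finset.eq_of_subset_of_card_le (Finset.filter_subset _ _)
    rw [hTangcard, ← htN]
  have hNℓ : N ∉ ℓ := by
    rw [hE, Finset.mem_sdiff] at hNE
    exact hNE.2
  refine ⟨N, hNℓ, fun o hoB h1 => ?_⟩
  have : o ∈ Tang := Finset.mem_filter.mpr ⟨hoB, h1⟩
  rw [← hfilt] at this
  exact (Finset.mem_filter.mp this).2
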